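/- Let V : ℝ³ → ℝ be bounded and measurable and let e₀, ω ∈ ℝ satisfy e₀ + ω ≥ 0. Suppose φ : ℝ³ → ℂ is a Schwartz function such that −Δφ(x) + V(x)φ(x) + ωφ(x) = −|φ(x)|²·φ(x) for every x ∈ ℝ³, and suppose the quadratic-form lower bound ∫_{ℝ³}(|∇φ(x)|² + V(x)|φ(x)|²) dx ≥ e₀·∫_{ℝ³}|φ(x)|² dx holds. Then φ is identically zero. -/

import Mathlib

open MeasureTheory
open scoped ComplexConjugate

noncomputable section

abbrev R3 := EuclideanSpace ℝ (Fin 3)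

/-- The spatial Laplacian of `φ : ℝ³ → ℂ`, computed as the sum of the second
partial derivatives in the coordinate directions. -/
def lap (φ : R3 → ℂ) (x : R3) : ℂ :=
  ∑ i : Fin 3,
    fderiv ℝ (fun y => fderiv ℝ φ y (EuclideanSpace.single i 1)) x
      (EuclideanSpace.single i 1)

lemma opnorm_sq_le (L : R3 →L[ℝ] ℂ) :
    ‖L‖ ^ 2 ≤ ∑ i : Fin 3, ‖L (EuclideanSpace.single i 1)‖ ^ 2 := by
  have hS0 : (0:ℝ) ≤ ∑ i : Fin 3, ‖L (EuclideanSpace.single i 1)‖ ^ 2 :=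
    Finset.sum_nonneg fun i _ => sq_nonneg _
  have hL : ‖L‖ ≤ Real.sqrt (∑ i : Fin 3, ‖L (EuclideanSpace.single i 1)‖ ^ 2) := by
    refine L.opNorm_le_bound (Real.sqrt_nonneg _) fun v => ?_
    have hv : v = ∑ i : Fin 3, v i • EuclideanSpace.single i (1:ℝ) := by
      ext j
      rw [WithLp.ofLp_sum, Finset.sum_apply]
      simp [EuclideanSpace.single_apply]
    calc ‖L v‖ = ‖∑ i : Fin 3, v i • L (EuclideanSpace.single i 1)‖ := by
          conv_lhs => rw [hv]
          simp
      _ ≤ ∑ i : Fin 3, ‖v i • L (EuclideanSpace.single i 1)‖ := norm_sum_le _ _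
      _ = ∑ i : Fin 3, |v i| * ‖L (EuclideanSpace.single i 1)‖ := by
          simp [norm_smul]
      _ ≤ Real.sqrt (∑ i : Fin 3, |v i| ^ 2) *
            Real.sqrt (∑ i : Fin 3, ‖L (EuclideanSpace.single i 1)‖ ^ 2) :=
          Real.sum_mul_le_sqrt_mul_sqrt _ _ _
      _ = Real.sqrt (∑ i : Fin 3, ‖L (EuclideanSpace.single i 1)‖ ^ 2) * ‖v‖ := by
          rw [EuclideanSpace.norm_eq, mul_comm]
          simp [Real.norm_eq_abs]
  calc ‖L‖ ^ 2 ≤ Real.sqrt (∑ i : Fin 3, ‖L (EuclideanSpace.single i 1)‖ ^ 2) ^ 2 :=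
        pow_le_pow_left₀ (norm_nonneg _) hL 2
    _ = _ := Real.sq_sqrt hS0

lemma conj_mul_int (f g : SchwartzMap R3 ℂ) :
    Integrable (fun x => conj (f x) * g x) (volume : Measure R3) := by
  refine (g.integrable (μ := volume)).bdd_mul
    (c := SchwartzMap.seminorm ℝ 0 0 f)
    ((Complex.continuous_conj.comp f.continuous).aestronglyMeasurable)
    (ae_of_all _ fun x => ?_)
  simpa using SchwartzMap.norm_le_seminorm ℝ f x

lemma normsq_int (f : SchwartzMap R3 ℂ) :
    Integrable (fun x : R3 => ‖f x‖ ^ 2) (volume : Measure R3) := by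
  have h := ((f.integrable (μ := volume)).norm).bdd_mul
    (c := SchwartzMap.seminorm ℝ 0 0 f)
    (f.continuous.norm.aestronglyMeasurable)
    (ae_of_all _ fun x => by
      simpa using SchwartzMap.norm_le_seminorm ℝ f x)
  simpa [pow_two] using h

lemma ibp (φ : SchwartzMap R3 ℂ) (i : Fin 3) :
    ∫ x : R3, conj (φ x) * fderiv ℝ (fun y => fderiv ℝ (⇑φ) y (EuclideanSpace.single i 1)) x
        (EuclideanSpace.single i 1)
      = -((∫ x : R3, ‖fderiv ℝ (⇑φ) x (EuclideanSpace.single i 1)‖ ^ 2 : ℝ) : ℂ) := by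
  set v : R3 := EuclideanSpace.single i 1 with hv
  set D : SchwartzMap R3 ℂ := (LineDeriv.lineDerivOp v φ : SchwartzMap R3 ℂ) with hDdef
  have hD : ∀ y, D y = fderiv ℝ (⇑φ) y v := fun y => SchwartzMap.lineDerivOp_apply_eq_fderiv v φ y
  have hD2 : ∀ y, (LineDeriv.lineDerivOp v D : SchwartzMap R3 ℂ) y = fderiv ℝ (⇑D) y v :=
    fun y => SchwartzMap.lineDerivOp_apply_eq_fderiv v D y
  have hconj : ∀ x : R3, fderiv ℝ (fun y => conj (φ y)) x v = conj (D x) := by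
    intro x
    have h1 : HasFDerivAt (fun y : R3 => conj (φ y))
        ((Complex.conjCLE.toContinuousLinearMap).comp (fderiv ℝ (⇑φ) x)) x :=
      (Complex.conjCLE.toContinuousLinearMap.hasFDerivAt).comp x φ.differentiableAt.hasFDerivAt
    rw [h1.fderiv]
    simp [hD x]
  have key := integral_mul_fderiv_eq_neg_fderiv_mul_of_integrable
      (μ := (volume : Measure R3)) (f := fun x : R3 => conj (φ x)) (g := ⇑D) (v := v)
      ?_ ?_ ?_ ?_ ?_
  · simp only [← hD]
    rw [key]
    simp only [hconj]
    have h2 : ∀ x : R3, conj (D x) * D x = ((‖D x‖ ^ 2 : ℝ) : ℂ) := by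
      intro x
      rw [RCLike.conj_mul]
      norm_cast
    simp only [h2]
    rw [show ((∫ x : R3, ‖D x‖ ^ 2 : ℝ) : ℂ) = ∫ x : R3, ((‖D x‖ ^ 2 : ℝ) : ℂ) from integral_ofReal.symm]
  · simp only [hconj]
    exact conj_mul_int D D
  · simp only [← hD2]
    exact conj_mul_int φ _
  · exact conj_mul_int φ D
  · exact fun x _ => Complex.conjCLE.toContinuousLinearMap.differentiable.comp φ.differentiable x
  · exact fun x _ => D.differentiable x

/-- Nonexistence of solitary waves for the defocusing cubic NLS with potential:
if `V` is bounded and measurable, `e₀ + ω ≥ 0`, `φ` is a Schwartz solution of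
`-Δφ + Vφ + ωφ = -|φ|²φ`, and the quadratic form of `-Δ + V` is bounded below by `e₀`
at `φ`, then `φ ≡ 0`. -/
theorem stmt0 (V : R3 → ℝ) (hVmeas : Measurable V) (hVbd : ∃ C, ∀ x, |V x| ≤ C)
    (e₀ ω : ℝ) (hω : 0 ≤ e₀ + ω) (φ : SchwartzMap R3 ℂ)
    (heq : ∀ x, -(lap (⇑φ) x) + (V x : ℂ) * φ x + (ω : ℂ) * φ x
      = -((‖φ x‖ : ℂ) ^ 2) * φ x)
    (hform : e₀ * ∫ x, ‖φ x‖ ^ 2 ≤ ∫ x, (‖fderiv ℝ (⇑φ) x‖ ^ 2 + V x * ‖φ x‖ ^ 2)) :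
    ∀ x, φ x = 0 := by
  classical
  obtain ⟨CV, hCV⟩ := hVbd
  set D : Fin 3 → SchwartzMap R3 ℂ :=
    fun i => (LineDeriv.lineDerivOp (EuclideanSpace.single i 1 : R3) φ : SchwartzMap R3 ℂ) with hDdef
  have hD : ∀ i y, D i y = fderiv ℝ (⇑φ) y (EuclideanSpace.single i 1) :=
    fun i y => SchwartzMap.lineDerivOp_apply_eq_fderiv _ φ y
  -- integrability facts
  have hI2 : Integrable (fun x : R3 => ‖φ x‖ ^ 2) volume := normsq_int φ
  have hI4 : Integrable (fun x : R3 => ‖φ x‖ ^ 4) volume := by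
    have h := hI2.bdd_mul (c := (SchwartzMap.seminorm ℝ 0 0 φ : ℝ) ^ 2)
      ((φ.continuous.norm.pow 2).aestronglyMeasurable) (ae_of_all _ fun x => by
        rw [Pi.pow_apply, Real.norm_eq_abs, abs_of_nonneg (by positivity)]
        exact pow_le_pow_left₀ (norm_nonneg _) (SchwartzMap.norm_le_seminorm ℝ φ x) 2)
    have h2 : (fun x : R3 => ‖φ x‖ ^ 2 * ‖φ x‖ ^ 2) = fun x : R3 => ‖φ x‖ ^ 4 :=
      funext fun x => by ring
    rw [← h2]
    exact h
  have hIV : Integrable (fun x : R3 => V x * ‖φ x‖ ^ 2) volume :=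
    hI2.bdd_mul (c := CV) hVmeas.aestronglyMeasurable (ae_of_all _ fun x => by
      rw [Real.norm_eq_abs]; exact hCV x)
  have hIDi : ∀ i : Fin 3, Integrable
      (fun x : R3 => ‖fderiv ℝ (⇑φ) x (EuclideanSpace.single i 1)‖ ^ 2) volume := by
    intro i
    have := normsq_int (D i)
    simpa [hD] using this
  have hIDsum : Integrable
      (fun x : R3 => ∑ i : Fin 3, ‖fderiv ℝ (⇑φ) x (EuclideanSpace.single i 1)‖ ^ 2) volume :=
    integrable_finset_sum _ fun i _ => hIDi i
  have hptw : ∀ x : R3, ‖fderiv ℝ (⇑φ) x‖ ^ 2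
      ≤ ∑ i : Fin 3, ‖fderiv ℝ (⇑φ) x (EuclideanSpace.single i 1)‖ ^ 2 :=
    fun x => opnorm_sq_le (fderiv ℝ (⇑φ) x)
  have hfc : Continuous fun x : R3 => fderiv ℝ (⇑φ) x := by
    have h := (SchwartzMap.fderivCLM ℝ R3 ℂ φ).continuous
    have h2 : ⇑(SchwartzMap.fderivCLM ℝ R3 ℂ φ) = fun x => fderiv ℝ (⇑φ) x :=
      funext fun x => SchwartzMap.fderivCLM_apply ℝ φ x
    rwa [h2] at h
  have hIfd : Integrable (fun x : R3 => ‖fderiv ℝ (⇑φ) x‖ ^ 2) volume := by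
    refine hIDsum.mono' ((hfc.norm.pow 2).aestronglyMeasurable) ?_
    filter_upwards with x
    rw [Real.norm_eq_abs, abs_of_nonneg (by positivity)]
    exact hptw x
  -- pointwise identity from the equation
  have heq2 : ∀ x, conj (φ x) * lap (⇑φ) x
      = ((V x * ‖φ x‖ ^ 2 + ω * ‖φ x‖ ^ 2 + ‖φ x‖ ^ 4 : ℝ) : ℂ) := by
    intro x
    have h := heq x
    have hl : lap (⇑φ) x = (V x : ℂ) * φ x + (ω : ℂ) * φ x + ((‖φ x‖ : ℂ)) ^ 2 * φ x := by
      linear_combination -h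
    calc conj (φ x) * lap (⇑φ) x
        = ((V x : ℂ) + (ω : ℂ) + ((‖φ x‖ : ℂ)) ^ 2) * (conj (φ x) * φ x) := by rw [hl]; ring
      _ = _ := by
          rw [mul_comm (conj (φ x)) (φ x), Complex.mul_conj]
          push_cast [Complex.normSq_eq_norm_sq]
          ring
  -- integral of conj φ * lap φ via integration by parts
  have hint : ∀ i : Fin 3, Integrable (fun x : R3 => conj (φ x) *
      fderiv ℝ (fun y => fderiv ℝ (⇑φ) y (EuclideanSpace.single i 1)) x
        (EuclideanSpace.single i 1)) volume := by
    intro i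
    have hDe : (fun y : R3 => fderiv ℝ (⇑φ) y (EuclideanSpace.single i 1)) = ⇑(D i) :=
      (funext (hD i)).symm
    have hD2 : ∀ x : R3, fderiv ℝ (⇑(D i)) x (EuclideanSpace.single i 1)
        = (LineDeriv.lineDerivOp (EuclideanSpace.single i 1 : R3) (D i) : SchwartzMap R3 ℂ) x :=
      fun x => (SchwartzMap.lineDerivOp_apply_eq_fderiv _ (D i) x).symm
    rw [hDe]
    simp only [hD2]
    exact conj_mul_int φ _
  have hintlap : ∫ x : R3, conj (φ x) * lap (⇑φ) x
      = -(((∑ i : Fin 3, ∫ x : R3, ‖fderiv ℝ (⇑φ) x (EuclideanSpace.single i 1)‖ ^ 2) : ℝ) : ℂ) := by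
    have h1 : (fun x : R3 => conj (φ x) * lap (⇑φ) x) = fun x : R3 => ∑ i : Fin 3, conj (φ x) *
        fderiv ℝ (fun y => fderiv ℝ (⇑φ) y (EuclideanSpace.single i 1)) x
          (EuclideanSpace.single i 1) := by
      funext x
      rw [lap, Finset.mul_sum]
    rw [h1, integral_finset_sum _ fun i _ => hint i,
      Finset.sum_congr rfl fun i _ => ibp φ i]
    push_cast
    rw [← Finset.sum_neg_distrib]
  -- combine with the equation
  have hA : ∫ x : R3, conj (φ x) * lap (⇑φ) x
      = ((∫ x : R3, (V x * ‖φ x‖ ^ 2 + ω * ‖φ x‖ ^ 2 + ‖φ x‖ ^ 4) : ℝ) : ℂ) := by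
    simp only [heq2]
    exact integral_ofReal
  rw [hintlap] at hA
  have hreal : -((∑ i : Fin 3, ∫ x : R3, ‖fderiv ℝ (⇑φ) x (EuclideanSpace.single i 1)‖ ^ 2) : ℝ)
      = ∫ x : R3, (V x * ‖φ x‖ ^ 2 + ω * ‖φ x‖ ^ 2 + ‖φ x‖ ^ 4) := by
    exact_mod_cast hA
  have hωI : Integrable (fun x : R3 => ω * ‖φ x‖ ^ 2) volume := hI2.const_mul ω
  have h12 : Integrable (fun x : R3 => V x * ‖φ x‖ ^ 2 + ω * ‖φ x‖ ^ 2) volume := hIV.add hωI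
  rw [integral_add h12 hI4, integral_add hIV hωI, integral_const_mul] at hreal
  -- the form bound
  rw [integral_add hIfd hIV] at hform
  have hmono : ∫ x : R3, ‖fderiv ℝ (⇑φ) x‖ ^ 2
      ≤ ∑ i : Fin 3, ∫ x : R3, ‖fderiv ℝ (⇑φ) x (EuclideanSpace.single i 1)‖ ^ 2 := by
    rw [← integral_finset_sum _ fun i _ => hIDi i]
    exact integral_mono hIfd hIDsum hptw
  have ha : 0 ≤ ∫ x : R3, ‖φ x‖ ^ 2 := integral_nonneg fun x => by positivity
  have hb : 0 ≤ ∫ x : R3, ‖φ x‖ ^ 4 := integral_nonneg fun x => by positivity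
  have hb0 : ∫ x : R3, ‖φ x‖ ^ 4 = 0 := by nlinarith [mul_nonneg hω ha]
  have hae : (fun x : R3 => ‖φ x‖ ^ 4) =ᵐ[volume] 0 :=
    (integral_eq_zero_iff_of_nonneg (fun x => by positivity) hI4).1 hb0
  have hzero : (fun x : R3 => ‖φ x‖ ^ 4) = 0 :=
    (Continuous.ae_eq_iff_eq volume ((φ.continuous.norm).pow 4) continuous_const).1 hae
  intro x
  have hx := congrFun hzero x
  simp only [Pi.zero_apply] at hx
  exact norm_eq_zero.mp (pow_eq_zero_iff (n := 4) (by norm_num) |>.mp hx)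

end
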